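/- Let H = 3/4 and ρ(r) = (1/2)(|r+1|^{3/2} + |r−1|^{3/2} − 2|r|^{3/2}), and σ_n² = 2 ∑_{k,l=0}^{n−1} ρ(k−l)². Then σ_n²/(n log n) → 9/16 as n → ∞. -/

import Mathlib

open Filter Real

/-- The increment covariance function of fractional Brownian motion with `H = 3/4`. -/
noncomputable def rho34 (r : ℤ) : ℝ :=
    (1 / 2 : ℝ) * (|(r : ℝ) + 1| ^ ((3 : ℝ) / 2) + |(r : ℝ) - 1| ^ ((3 : ℝ) / 2)
      - 2 * |(r : ℝ)| ^ ((3 : ℝ) / 2))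

open Finset Asymptotics

lemma key_alg (u v w : ℝ) (hu : u^2 = v^2+1) (hw : w^2 = v^2-1) :
    (u^3+w^3-2*v^3)*((u+v)*((v+w)*(w+u))) = 2*(u*v+v*w+w*u) := by
  linear_combination (v*(w+u)+u*w+(u^2+u*v+v^2)*(v+w)*(w+u)) * hu +
    (-(v*(w+u))-u*w+(v^2+v*w+w^2)*(u+v)*(w+u)) * hw

lemma rpow_32 (x : ℝ) (hx : 0 ≤ x) : x ^ ((3:ℝ)/2) = (Real.sqrt x) ^ 3 := by
  rw [Real.sqrt_eq_rpow, ← Real.rpow_natCast (x ^ ((1:ℝ)/2)) 3, ← Real.rpow_mul hx]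
  norm_num

lemma rho34_closed (r : ℕ) (hr : 1 ≤ r) :
    rho34 r = (Real.sqrt ((r:ℝ)+1) * Real.sqrt r + Real.sqrt r * Real.sqrt ((r:ℝ)-1)
        + Real.sqrt ((r:ℝ)-1) * Real.sqrt ((r:ℝ)+1)) /
      ((Real.sqrt ((r:ℝ)+1) + Real.sqrt r) * ((Real.sqrt r + Real.sqrt ((r:ℝ)-1))
        * (Real.sqrt ((r:ℝ)-1) + Real.sqrt ((r:ℝ)+1)))) := by
  have hr1 : (1:ℝ) ≤ (r:ℝ) := by exact_mod_cast hr
  set u := Real.sqrt ((r:ℝ)+1) with hud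
  set v := Real.sqrt (r:ℝ) with hvd
  set w := Real.sqrt ((r:ℝ)-1) with hwd
  have hu2 : u^2 = v^2 + 1 := by
    rw [hud, hvd, Real.sq_sqrt (by positivity), Real.sq_sqrt (by linarith)]
  have hw2 : w^2 = v^2 - 1 := by
    rw [hwd, hvd, Real.sq_sqrt (by linarith), Real.sq_sqrt (by linarith)]
  have hu0 : 0 < u := Real.sqrt_pos.2 (by linarith)
  have hv0 : 0 < v := Real.sqrt_pos.2 (by linarith)
  have hw0 : 0 ≤ w := Real.sqrt_nonneg _
  have habs : rho34 r = (1/2) * (u^3 + w^3 - 2*v^3) := by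
    have h1 : |(r:ℝ) + 1| = (r:ℝ)+1 := abs_of_nonneg (by linarith)
    have h2 : |(r:ℝ) - 1| = (r:ℝ)-1 := abs_of_nonneg (by linarith)
    have h3 : |(r:ℝ)| = (r:ℝ) := abs_of_nonneg (by linarith)
    simp only [rho34, Int.cast_natCast, h1, h2, h3]
    rw [rpow_32 _ (by linarith : (0:ℝ) ≤ (r:ℝ)+1), rpow_32 _ (by linarith : (0:ℝ) ≤ (r:ℝ)-1),
      rpow_32 _ (by linarith : (0:ℝ) ≤ (r:ℝ))]
  rw [habs, eq_div_iff (by positivity)]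
  linear_combination (1/2) * key_alg u v w hu2 hw2

lemma tendsto_r_rho_sq : Tendsto (fun r : ℕ => (r:ℝ) * rho34 r ^ 2) atTop (nhds (9/64)) := by
  have h1 : Tendsto (fun r : ℕ => Real.sqrt (((r:ℝ)+1)/r)) atTop (nhds 1) := by
    have h0 : Tendsto (fun r : ℕ => ((r:ℝ)+1)/r) atTop (nhds 1) := by
      have := tendsto_one_div_atTop_nhds_zero_nat (𝕜 := ℝ)
      have h := this.const_add 1
      rw [add_zero] at h
      apply h.congr'
      filter_upwards [eventually_ge_atTop 1] with r hr
      have : (r:ℝ) ≠ 0 := by positivity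
      field_simp
    have := (Real.continuous_sqrt.tendsto 1).comp h0
    rw [Real.sqrt_one] at this
    exact this
  have h2 : Tendsto (fun r : ℕ => Real.sqrt (((r:ℝ)-1)/r)) atTop (nhds 1) := by
    have h0 : Tendsto (fun r : ℕ => ((r:ℝ)-1)/r) atTop (nhds 1) := by
      have := tendsto_one_div_atTop_nhds_zero_nat (𝕜 := ℝ)
      have h := (tendsto_const_nhds (x := (1:ℝ)) (f := atTop (α := ℕ))).sub this
      rw [sub_zero] at h
      apply h.congr'
      filter_upwards [eventually_ge_atTop 1] with r hr
      have : (r:ℝ) ≠ 0 := by positivity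
      field_simp
    have := (Real.continuous_sqrt.tendsto 1).comp h0
    rw [Real.sqrt_one] at this
    exact this
  have hsq : Tendsto (fun r : ℕ => Real.sqrt r * rho34 r) atTop (nhds (3/8)) := by
    have hG : Tendsto (fun r : ℕ =>
        (Real.sqrt (((r:ℝ)+1)/r) + Real.sqrt (((r:ℝ)-1)/r)
          + Real.sqrt (((r:ℝ)+1)/r) * Real.sqrt (((r:ℝ)-1)/r)) /
        ((Real.sqrt (((r:ℝ)+1)/r) + 1) * ((1 + Real.sqrt (((r:ℝ)-1)/r))
          * (Real.sqrt (((r:ℝ)-1)/r) + Real.sqrt (((r:ℝ)+1)/r))))) atTop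
        (nhds ((1+1+1*1)/((1+1)*((1+1)*(1+1))))) :=
      ((h1.add h2).add (h1.mul h2)).div
        (((h1.add tendsto_const_nhds).mul
          ((tendsto_const_nhds.add h2).mul (h2.add h1)))) (by norm_num)
    norm_num at hG
    apply hG.congr'
    filter_upwards [eventually_ge_atTop 1] with r hr
    have hr1 : (1:ℝ) ≤ (r:ℝ) := by exact_mod_cast hr
    have hv0 : (0:ℝ) < Real.sqrt r := Real.sqrt_pos.2 (by linarith)
    rw [rho34_closed r hr]
    have hu0 : (0:ℝ) < Real.sqrt ((r:ℝ)+1) := Real.sqrt_pos.2 (by linarith)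
    have hw0 : (0:ℝ) ≤ Real.sqrt ((r:ℝ)-1) := Real.sqrt_nonneg _
    have hD : (0:ℝ) < (Real.sqrt ((r:ℝ)+1) + Real.sqrt r) * ((Real.sqrt r + Real.sqrt ((r:ℝ)-1))
        * (Real.sqrt ((r:ℝ)-1) + Real.sqrt ((r:ℝ)+1))) := by positivity
    have hv2 : Real.sqrt (r:ℝ) ^ 2 = (r:ℝ) := Real.sq_sqrt (by linarith)
    field_simp
  have := hsq.mul hsq
  norm_num at this
  apply this.congr
  intro r
  rw [mul_mul_mul_comm, Real.mul_self_sqrt (Nat.cast_nonneg r), sq]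

noncomputable def cseq : ℕ → ℝ := fun r => if r = 0 then 1 else 2 * rho34 r ^ 2

lemma rho34_zero : rho34 0 = 1 := by
  simp [rho34, Real.one_rpow, Real.zero_rpow (by norm_num : (3:ℝ)/2 ≠ 0)]
  norm_num

lemma rho34_neg (x : ℤ) : rho34 (-x) = rho34 x := by
  unfold rho34
  push_cast
  rw [show -(x:ℝ)+1 = -((x:ℝ)-1) by ring, show -(x:ℝ)-1 = -((x:ℝ)+1) by ring,
    abs_neg, abs_neg, abs_neg]
  ring

lemma sum_id (n : ℕ) :
    (∑ k ∈ Finset.range n, ∑ l ∈ Finset.range n, rho34 ((k : ℤ) - (l : ℤ)) ^ 2)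
      = ∑ r ∈ Finset.range n, ((n:ℝ) - r) * cseq r := by
  induction n with
  | zero => simp
  | succ n ih =>
    have refl2 : ∑ k ∈ range n, rho34 ((k:ℤ) - (n:ℤ))^2
        = ∑ j ∈ range n, rho34 ((j:ℤ)+1)^2 := by
      rw [← Finset.sum_range_reflect (fun j => rho34 ((j:ℤ)+1)^2) n]
      apply Finset.sum_congr rfl
      intro k hk
      have hkn : k < n := Finset.mem_range.mp hk
      rw [← rho34_neg ((k:ℤ) - n)]
      congr 2
      ring_nf
      omega
    have refl2' : ∑ l ∈ range n, rho34 ((n:ℤ) - (l:ℤ))^2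
        = ∑ j ∈ range n, rho34 ((j:ℤ)+1)^2 := by
      rw [← refl2]
      apply Finset.sum_congr rfl
      intro l hl
      rw [← rho34_neg ((l:ℤ) - n)]
      congr 2
      ring
    have hc : ∑ r ∈ range (n+1), cseq r = 1 + 2 * ∑ j ∈ range n, rho34 ((j:ℤ)+1)^2 := by
      rw [Finset.sum_range_succ']
      have : ∀ i : ℕ, cseq (i+1) = 2 * rho34 ((i:ℤ)+1)^2 := by
        intro i
        simp only [cseq, Nat.succ_ne_zero, if_false]
        push_cast
        ring
      simp only [this]
      rw [← Finset.mul_sum]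
      simp [cseq]
      ring
    have hsplit : ∑ r ∈ range n, (((n:ℝ)+1) - r) * cseq r
        = (∑ r ∈ range n, ((n:ℝ) - r) * cseq r) + ∑ r ∈ range n, cseq r := by
      rw [← Finset.sum_add_distrib]
      apply Finset.sum_congr rfl
      intro r _
      ring
    simp only [Finset.sum_range_succ, Finset.sum_add_distrib]
    rw [ih, refl2, refl2']
    rw [Finset.sum_range_succ] at hc
    push_cast
    rw [hsplit]
    have h00 : rho34 ((n:ℤ) - (n:ℤ))^2 = 1 := by rw [sub_self, rho34_zero]; norm_num
    rw [h00]
    linarith [hc]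

lemma loglim : Tendsto (fun n : ℕ => Real.log n) atTop atTop :=
  Real.tendsto_log_atTop.comp tendsto_natCast_atTop_atTop

lemma tendsto_rc : Tendsto (fun r : ℕ => (r:ℝ) * cseq r) atTop (nhds (9/32)) := by
  have h := tendsto_r_rho_sq.const_mul (2:ℝ)
  norm_num at h
  apply h.congr'
  filter_upwards [eventually_ge_atTop 1] with r hr
  simp only [cseq, if_neg (by omega : ¬ r = 0)]
  ring

lemma tendsto_c0 : Tendsto cseq atTop (nhds 0) := by
  have h := tendsto_rc.mul tendsto_one_div_atTop_nhds_zero_nat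
  norm_num at h
  apply h.congr'
  filter_upwards [eventually_ge_atTop 1] with r hr
  have : (r:ℝ) ≠ 0 := by positivity
  field_simp

lemma tendsto_r1c : Tendsto (fun r : ℕ => ((r:ℝ)+1) * cseq r) atTop (nhds (9/32)) := by
  have h := tendsto_rc.add tendsto_c0
  norm_num at h
  apply h.congr
  intro r
  ring

lemma littleo : (fun r : ℕ => cseq r - (9/32) * (1/((r:ℝ)+1)))
    =o[atTop] (fun r : ℕ => 1/((r:ℝ)+1)) := by
  rw [Asymptotics.isLittleO_iff_tendsto (fun x hx => absurd hx (by positivity))]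
  have h := tendsto_r1c.sub (tendsto_const_nhds (x := (9:ℝ)/32))
  rw [sub_self] at h
  apply h.congr
  intro r
  have hr : ((r:ℝ)+1) ≠ 0 := by positivity
  field_simp

lemma harm_eq (n : ℕ) : (harmonic n : ℝ) = ∑ i ∈ range n, 1/((i:ℝ)+1) := by
  rw [harmonic]
  push_cast
  simp [one_div]

lemma hB_top : Tendsto (fun n : ℕ => ∑ i ∈ range n, 1/((i:ℝ)+1)) atTop atTop := by
  have := Real.tendsto_harmonic_sub_log.add_atTop loglim
  apply this.congr
  intro n
  simp [harm_eq]

lemma hH : Tendsto (fun n : ℕ => (∑ i ∈ range n, 1/((i:ℝ)+1)) / Real.log n) atTop (nhds 1) := by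
  have h2 : Tendsto (fun n : ℕ => ((harmonic n : ℝ) - Real.log n) * (Real.log n)⁻¹)
      atTop (nhds 0) := by
    have := Real.tendsto_harmonic_sub_log.mul (tendsto_inv_atTop_zero.comp loglim)
    simpa using this
  have h3 := h2.const_add (1:ℝ)
  rw [add_zero] at h3
  apply h3.congr'
  filter_upwards [loglim.eventually (eventually_gt_atTop 0)] with n hn
  rw [← harm_eq]
  field_simp
  ring

lemma hsum_c : Tendsto (fun n : ℕ => (∑ r ∈ range n, cseq r) / Real.log n)
    atTop (nhds (9/32)) := by
  have ho := littleo.sum_range (fun i => by positivity) hB_top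
  rw [Asymptotics.isLittleO_iff_tendsto ?hz] at ho
  case hz =>
    intro n hn
    cases n with
    | zero => simp
    | succ m =>
      exfalso
      have : (0:ℝ) < ∑ i ∈ range (m+1), 1/((i:ℝ)+1) :=
        Finset.sum_pos (fun i _ => by positivity) (by simp)
      linarith
  have hlim := (ho.mul hH).add (hH.const_mul (9/32 : ℝ))
  norm_num at hlim
  apply hlim.congr'
  filter_upwards [eventually_ge_atTop 1] with n hn
  have hg : (0:ℝ) < ∑ i ∈ range n, ((i:ℝ)+1)⁻¹ :=
    Finset.sum_pos (fun i _ => by positivity) (Finset.nonempty_range_iff.2 (by omega))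
  rw [← Finset.mul_sum]
  by_cases hL : Real.log n = 0
  · rw [hL, div_zero, div_zero, mul_zero, mul_zero, add_zero]
  · rw [div_mul_div_comm, mul_comm (∑ i ∈ range n, ((i:ℝ)+1)⁻¹) (Real.log n),
      mul_div_mul_right _ _ hg.ne', mul_div_assoc', ← add_div, sub_add_cancel]

theorem variance_asymptotics_H_three_quarters :
    Tendsto
      (fun n : ℕ =>
        (2 * ∑ k ∈ Finset.range n, ∑ l ∈ Finset.range n, rho34 ((k : ℤ) - (l : ℤ)) ^ 2)
          / ((n : ℝ) * Real.log n))
      atTop (nhds (9 / 16)) := by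
  have hces : Tendsto (fun n : ℕ => (n:ℝ)⁻¹ * ∑ r ∈ range n, (r:ℝ) * cseq r)
      atTop (nhds (9/32)) := tendsto_rc.cesaro
  have h2 := (hsum_c.const_mul (2:ℝ)).sub
    (((hces.mul (tendsto_inv_atTop_zero.comp loglim)).const_mul (2:ℝ)))
  norm_num at h2
  apply h2.congr'
  filter_upwards [eventually_ge_atTop 1, loglim.eventually (eventually_gt_atTop 0)] with n hn hL
  have hn0 : (n:ℝ) ≠ 0 := by positivity
  rw [sum_id n]
  have hS : ∑ r ∈ range n, ((n:ℝ) - r) * cseq r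
      = (n:ℝ) * (∑ r ∈ range n, cseq r) - ∑ r ∈ range n, (r:ℝ) * cseq r := by
    rw [Finset.mul_sum, ← Finset.sum_sub_distrib]
    exact Finset.sum_congr rfl (fun r _ => by ring)
  rw [hS]
  field_simp
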